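/- Let p be a prime, t_1,...,t_k integers with p ∤ t_k, and C(X) = X^k - t_1 X^{k-1} - ... - t_k. If C(X) has a repeated irreducible factor mod p, then p divides the period c_p of the generalized Fibonacci sequence mod p. -/

import Mathlib

open Polynomial

/-- if `p ∤ t_k` and the core polynomial has a repeated irreducible
factor mod `p`, then `p` divides the period `c_p` of the generalized Fibonacci
sequence mod `p`. -/
theorem p_dvd_period_of_repeated_factor
    (k : ℕ) (hk : 1 ≤ k) (t : Fin k → ℤ) (f : ℕ → ℤ)
    (h0 : ∀ j, j < k - 1 → f j = 0) (h1 : f (k - 1) = 1)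
    (hrec : ∀ n, k ≤ n → f n = ∑ j : Fin k, t j * f (n - 1 - (j : ℕ)))
    (p : ℕ) (hp : p.Prime) (hpt : ¬ (p : ℤ) ∣ t ⟨k - 1, by omega⟩)
    (hrep : ∃ q : Polynomial (ZMod p), Irreducible q ∧
      q ^ 2 ∣ Polynomial.map (Int.castRingHom (ZMod p))
        (Polynomial.X ^ k -
          ∑ j : Fin k, Polynomial.C (t j) * Polynomial.X ^ (k - 1 - (j : ℕ)))) :
    p ∣ sInf {c : ℕ | 0 < c ∧ ∀ n, ((f (n + c) : ZMod p) = (f n : ZMod p))} := by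
  classical
  haveI : Fact p.Prime := ⟨hp⟩
  by_cases hS : {c : ℕ | 0 < c ∧ ∀ n, ((f (n + c) : ZMod p) = (f n : ZMod p))}.Nonempty
  swap
  · rw [Set.not_nonempty_iff_eq_empty] at hS
    rw [hS, Nat.sInf_empty]
    exact dvd_zero p
  obtain ⟨hc0, hper⟩ := Nat.sInf_mem hS
  set c := sInf {c : ℕ | 0 < c ∧ ∀ n, ((f (n + c) : ZMod p) = (f n : ZMod p))} with hcdef
  by_contra hpc
  set g : ℕ → ZMod p := fun n => ((f n : ℤ) : ZMod p) with hg
  set T : (ZMod p)[X] := ∑ j : Fin k, Polynomial.C ((t j : ZMod p)) * Polynomial.X ^ (k - 1 - (j : ℕ)) with hT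
  set Cb : (ZMod p)[X] := Polynomial.X ^ k - T with hCbdef
  have hTdeg : T.degree < (k : WithBot ℕ) := by
    refine lt_of_le_of_lt (Polynomial.degree_sum_le _ _) ?_
    rw [Finset.sup_lt_iff (by exact WithBot.bot_lt_coe k)]
    intro j _
    refine lt_of_le_of_lt (Polynomial.degree_C_mul_X_pow_le _ _) ?_
    exact_mod_cast (by omega : k - 1 - (j : ℕ) < k)
  have hCb : Cb.Monic := Polynomial.monic_X_pow_sub hTdeg
  have hdeg : Cb.degree = (k : WithBot ℕ) := by
    rw [hCbdef, Polynomial.degree_sub_eq_left_of_degree_lt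
      (by rwa [Polynomial.degree_X_pow]), Polynomial.degree_X_pow]
  have hXk : (Polynomial.X : (ZMod p)[X]) ^ k = Cb + T := by
    rw [hCbdef]; ring
  -- key coefficient lemma
  have key : ∀ n, ((Polynomial.X ^ n %ₘ Cb).coeff (k - 1)) = g n := by
    intro n
    induction n using Nat.strong_induction_on with
    | _ n ih =>
      rcases lt_or_ge n k with hn | hn
      · rw [(Polynomial.modByMonic_eq_self_iff hCb).2
          (by rw [hdeg, Polynomial.degree_X_pow]; exact_mod_cast hn)]
        rw [Polynomial.coeff_X_pow]
        rcases eq_or_ne n (k - 1) with h | h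
        · simp [h, hg, h1]
        · rw [if_neg (Ne.symm h)]
          have := h0 n (by omega)
          simp [hg, this]
      · have hXn : (Polynomial.X : (ZMod p)[X]) ^ n =
            Polynomial.X ^ (n - k) * Cb +
              ∑ j : Fin k, (t j : ZMod p) • Polynomial.X ^ (n - 1 - (j : ℕ)) := by
          have h1' : (Polynomial.X : (ZMod p)[X]) ^ n = Polynomial.X ^ (n - k) * Polynomial.X ^ k := by
            rw [← pow_add]; congr 1; omega
          rw [h1', hXk, mul_add]
          congr 1
          rw [hT, Finset.mul_sum]
          refine Finset.sum_congr rfl fun j _ => ?_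
          rw [Polynomial.smul_eq_C_mul, mul_left_comm, ← pow_add]
          congr 2
          have := j.isLt
          omega
        rw [hXn, Polynomial.add_modByMonic,
          (Polynomial.modByMonic_eq_zero_iff_dvd hCb).2 ⟨Polynomial.X ^ (n - k), mul_comm _ _⟩,
          zero_add]
        have hsum : (∑ j : Fin k, (t j : ZMod p) • (Polynomial.X : (ZMod p)[X]) ^ (n - 1 - (j : ℕ))) %ₘ Cb
            = ∑ j : Fin k, (t j : ZMod p) • ((Polynomial.X : (ZMod p)[X]) ^ (n - 1 - (j : ℕ)) %ₘ Cb) := by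
          have haux : ∀ s : Finset (Fin k),
              (∑ j ∈ s, (t j : ZMod p) • (Polynomial.X : (ZMod p)[X]) ^ (n - 1 - (j : ℕ))) %ₘ Cb
              = ∑ j ∈ s, (t j : ZMod p) • ((Polynomial.X : (ZMod p)[X]) ^ (n - 1 - (j : ℕ)) %ₘ Cb) := by
            intro s
            induction s using Finset.induction with
            | empty => simp [Polynomial.zero_modByMonic]
            | insert _ _ hj ihs =>
                rw [Finset.sum_insert hj, Finset.sum_insert hj, Polynomial.add_modByMonic,
                  Polynomial.smul_modByMonic, ihs]
          exact haux Finset.univ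
        rw [hsum, Polynomial.finset_sum_coeff]
        simp only [Polynomial.coeff_smul, smul_eq_mul]
        rw [Finset.sum_congr rfl fun j _ => by rw [ih (n - 1 - (j : ℕ)) (by omega)]]
        have hfr := hrec n hn
        rw [hg]
        simp only
        rw [hfr]
        push_cast
        rfl
  -- periodicity kills all pairings
  have hco : ∀ n, ((Polynomial.X ^ n * (Polynomial.X ^ c - 1) : (ZMod p)[X]) %ₘ Cb).coeff (k - 1) = 0 := by
    intro n
    have hpoly : (Polynomial.X ^ n * (Polynomial.X ^ c - 1) : (ZMod p)[X])
        = Polynomial.X ^ (n + c) - Polynomial.X ^ n := by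
      rw [mul_sub, mul_one, ← pow_add]
    rw [hpoly, Polynomial.sub_modByMonic, Polynomial.coeff_sub, key, key]
    have := hper n
    simp only [hg]
    rw [show ((f (n + c) : ℤ) : ZMod p) = ((f n : ℤ) : ZMod p) from this, sub_self]
  -- nondegeneracy: Cb ∣ X^c - 1
  have hdvd : Cb ∣ (Polynomial.X ^ c - 1 : (ZMod p)[X]) := by
    rw [← Polynomial.modByMonic_eq_zero_iff_dvd hCb]
    by_contra ha
    set a : (ZMod p)[X] := (Polynomial.X ^ c - 1) %ₘ Cb with hadef
    set d := a.natDegree with hddef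
    have hadeg : a.degree < Cb.degree := Polynomial.degree_modByMonic_lt _ hCb
    have hd : d < k := by
      rw [hdeg] at hadeg
      exact_mod_cast (Polynomial.degree_eq_natDegree ha ▸ hadeg :
        ((d : ℕ) : WithBot ℕ) < (k : WithBot ℕ))
    have hdiff : Cb ∣ (Polynomial.X ^ (k - 1 - d) * (Polynomial.X ^ c - 1)
        - Polynomial.X ^ (k - 1 - d) * a) := by
      rw [← mul_sub]
      refine Dvd.dvd.mul_left ?_ _
      refine ⟨(Polynomial.X ^ c - 1) /ₘ Cb, ?_⟩
      have := Polynomial.modByMonic_add_div (Polynomial.X ^ c - 1 : (ZMod p)[X]) Cb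
      rw [hadef]
      linear_combination -this
    have hmod : (Polynomial.X ^ (k - 1 - d) * (Polynomial.X ^ c - 1) : (ZMod p)[X]) %ₘ Cb
        = (Polynomial.X ^ (k - 1 - d) * a) %ₘ Cb := by
      have h0' : (Polynomial.X ^ (k - 1 - d) * (Polynomial.X ^ c - 1) : (ZMod p)[X]) %ₘ Cb
          - (Polynomial.X ^ (k - 1 - d) * a) %ₘ Cb = 0 := by
        rw [← Polynomial.sub_modByMonic, (Polynomial.modByMonic_eq_zero_iff_dvd hCb).2 hdiff]
      exact sub_eq_zero.mp h0'
    have hsmall : ((Polynomial.X ^ (k - 1 - d) * a : (ZMod p)[X])).degree < Cb.degree := by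
      rw [hdeg]
      refine lt_of_le_of_lt (Polynomial.degree_mul_le _ _) ?_
      rw [Polynomial.degree_X_pow, Polynomial.degree_eq_natDegree ha, ← hddef]
      exact_mod_cast (by omega : (k - 1 - d) + d < k)
    have hz := hco (k - 1 - d)
    rw [hmod, (Polynomial.modByMonic_eq_self_iff hCb).2 hsmall] at hz
    have hco' : ((Polynomial.X ^ (k - 1 - d) * a : (ZMod p)[X])).coeff (k - 1) = a.coeff d := by
      have := Polynomial.coeff_X_pow_mul a (k - 1 - d) d
      rwa [show d + (k - 1 - d) = k - 1 by omega] at this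
    rw [hco'] at hz
    exact (Polynomial.leadingCoeff_ne_zero.2 ha) hz
  -- finish: separability contradiction
  obtain ⟨q, hqirr, hq2⟩ := hrep
  have hmap : Polynomial.map (Int.castRingHom (ZMod p))
      (Polynomial.X ^ k - ∑ j : Fin k, Polynomial.C (t j) * Polynomial.X ^ (k - 1 - (j : ℕ))) = Cb := by
    rw [hCbdef, hT, Polynomial.map_sub, Polynomial.map_pow, Polynomial.map_X, Polynomial.map_sum]
    congr 1
    refine Finset.sum_congr rfl fun j _ => ?_
    rw [Polynomial.map_mul, Polynomial.map_C, Polynomial.map_pow, Polynomial.map_X]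
    rfl
  rw [hmap] at hq2
  have hq2' : q ^ 2 ∣ (Polynomial.X ^ c - 1 : (ZMod p)[X]) := hq2.trans hdvd
  have hcne : ((c : ZMod p)) ≠ 0 := by
    rwa [Ne, ZMod.natCast_eq_zero_iff]
  have hsep : (Polynomial.X ^ c - 1 : (ZMod p)[X]).Separable := by
    simpa using Polynomial.separable_X_pow_sub_C (1 : ZMod p) hcne one_ne_zero
  have hsq : Squarefree (Polynomial.X ^ c - 1 : (ZMod p)[X]) := hsep.squarefree
  exact hqirr.not_isUnit (hsq q (by rw [← sq]; exact hq2'))
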